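/- arXiv:2010.15636 — 2 statements merged into one kernel-verified Lean document; each statement's English description precedes it below -/
import Mathlib

section
/- Let U ∈ ℝ^{m×m} have SVD U = AΣBᵀ with A, B orthogonal and Σ = diag(σ_1,…,σ_m), and let r ∈ [m]. For any subset I ⊂ [m] with |I| = r, the matrix X = A Σ_I Bᵀ, where Σ_I is the diagonal matrix keeping only the singular values with indices in I (others set to 0), satisfies ⟨X, C(U)⟩_F = r · det(U), where C(U) is the cofactor matrix of U and ⟨·,·⟩_F is the Frobenius inner product. -/
open Matrix

/-- Let `U = A Σ Bᵀ` be an SVD of a square matrix `U`, `I ⊆ [m]` with `|I| = r`, and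
`X = A Σ_I Bᵀ` the corresponding Eckart–Young critical point.  Then
`⟨X, C(U)⟩_F = r · det U`, where `C(U) = (adjugate U)ᵀ` is the cofactor matrix and
`⟨X, C⟩_F = trace (X Cᵀ)`. -/
theorem stmt_3 {m : ℕ} (A B : Matrix (Fin m) (Fin m) ℝ) (σ : Fin m → ℝ)
    (hA : A * Aᵀ = 1) (hB : B * Bᵀ = 1)
    (U : Matrix (Fin m) (Fin m) ℝ) (hU : U = A * Matrix.diagonal σ * Bᵀ)
    (I : Finset (Fin m)) (r : ℕ) (hr : I.card = r) (hrm : r ≤ m)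
    (X : Matrix (Fin m) (Fin m) ℝ)
    (hX : X = A * Matrix.diagonal (fun i => if i ∈ I then σ i else 0) * Bᵀ) :
    Matrix.trace (X * (((U.adjugate)ᵀ)ᵀ)) = (r : ℝ) * U.det := by
  set D := Matrix.diagonal σ with hD
  set E := Matrix.diagonal (fun i => if i ∈ I then (1:ℝ) else 0) with hEdef
  have hE : Matrix.diagonal (fun i => if i ∈ I then σ i else 0) = D * E := by
    rw [hD, hEdef, Matrix.diagonal_mul_diagonal]
    congr 1; funext i; by_cases h : i ∈ I <;> simp [h]
  subst hU hX
  rw [Matrix.transpose_transpose, hE, Matrix.adjugate_mul_distrib,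
    Matrix.adjugate_mul_distrib]
  rw [Matrix.trace_mul_comm]
  have assoc : (Bᵀ.adjugate * (D.adjugate * A.adjugate)) * (A * (D * E) * Bᵀ)
      = Bᵀ.adjugate * (D.adjugate * ((A.adjugate * A) * (D * E))) * Bᵀ := by
    simp only [Matrix.mul_assoc]
  rw [assoc, Matrix.adjugate_mul]
  simp only [Matrix.smul_mul, Matrix.mul_smul, Matrix.one_mul, Matrix.trace_smul]
  rw [Matrix.trace_mul_comm]
  have assoc2 : Bᵀ * (Bᵀ.adjugate * (D.adjugate * (D * E)))
      = (Bᵀ * Bᵀ.adjugate) * (D.adjugate * D * E) := by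
    simp only [Matrix.mul_assoc]
  rw [assoc2, Matrix.mul_adjugate, Matrix.adjugate_mul]
  simp only [Matrix.smul_mul, Matrix.mul_smul, Matrix.one_mul, Matrix.trace_smul]
  have htrE : Matrix.trace E = (r : ℝ) := by
    rw [hEdef, Matrix.trace_diagonal, ← hr]
    rw [Finset.sum_ite_mem, Finset.univ_inter, Finset.sum_const, nsmul_eq_mul, mul_one]
  rw [htrE]
  have hdet : (A * (D * E) * Bᵀ).det = A.det * (D.det * E.det) * Bᵀ.det := by
    simp [Matrix.det_mul]
  rw [Matrix.det_mul, Matrix.det_mul]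
  simp only [smul_eq_mul]
  ring
end

section
/- Let X be an m×m matrix over a field, and let I, J ⊂ [m] with |I| = |J| ≥ 1. Then the minor of the cofactor matrix C(X) with rows I and columns J satisfies M_{I,J}(C(X)) = (−1)^{Σ_{i∈I} i + Σ_{j∈J} j} · det(X)^{|I|−1} · M_{[m]∖I, [m]∖J}(X), where M_{A,B}(Y) denotes the minor of Y with rows A and columns B. -/
open Matrix

/-- The minor of a square matrix `Y` with rows `I` and columns `J` (in increasing order);
by convention it is `0` when `|I| ≠ |J|`, and `M_{∅,∅}(Y) = 1`. -/
noncomputable def minorOf {m : ℕ} {K : Type*} [CommRing K] (Y : Matrix (Fin m) (Fin m) K)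
    (I J : Finset (Fin m)) : K :=
  if h : I.card = J.card then
    (Y.submatrix (⇑(I.orderEmbOfFin rfl)) (⇑(J.orderEmbOfFin h.symm))).det
  else 0

namespace JacobiAux

open Finset Equiv

variable {m k r : ℕ}

/-- The equiv `Fin k ⊕ Fin r ≃ Fin m` enumerating `I` then `Iᶜ` in increasing order. -/
noncomputable def embEquiv (I : Finset (Fin m)) (hI : I.card = k) (hIc : Iᶜ.card = r) :
    (Fin k ⊕ Fin r) ≃ Fin m := by
  refine Equiv.ofBijective (Sum.elim ⇑(I.orderEmbOfFin hI) ⇑(Iᶜ.orderEmbOfFin hIc)) ?_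
  have hkr : k + r = m := by
    have := Finset.card_compl_add_card I
    simp only [Fintype.card_fin] at this
    omega
  refine (Fintype.bijective_iff_injective_and_card _).2 ⟨?_, by simp [hkr]⟩
  rintro (a | a) (b | b) hab
  · simp only [Sum.elim_inl] at hab
    exact congrArg Sum.inl ((I.orderEmbOfFin hI).injective hab)
  · exfalso
    simp only [Sum.elim_inl, Sum.elim_inr] at hab
    have h1 := I.orderEmbOfFin_mem hI a
    have h2 := Iᶜ.orderEmbOfFin_mem hIc b
    rw [hab] at h1
    exact (Finset.mem_compl.1 h2) h1
  · exfalso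
    simp only [Sum.elim_inl, Sum.elim_inr] at hab
    have h1 := I.orderEmbOfFin_mem hI b
    have h2 := Iᶜ.orderEmbOfFin_mem hIc a
    rw [hab] at h2
    exact (Finset.mem_compl.1 h2) h1
  · simp only [Sum.elim_inr] at hab
    exact congrArg Sum.inr ((Iᶜ.orderEmbOfFin hIc).injective hab)

@[simp] lemma embEquiv_inl (I : Finset (Fin m)) (hI : I.card = k) (hIc : Iᶜ.card = r)
    (t : Fin k) : embEquiv I hI hIc (Sum.inl t) = I.orderEmbOfFin hI t := rfl

@[simp] lemma embEquiv_inr (I : Finset (Fin m)) (hI : I.card = k) (hIc : Iᶜ.card = r)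
    (t : Fin r) : embEquiv I hI hIc (Sum.inr t) = Iᶜ.orderEmbOfFin hIc t := rfl

lemma swap_orderEmbOfFin {A : Finset (Fin m)} (hA : A.card = k) {i' i : Fin m}
    (hadj : (i' : ℕ) + 1 = (i : ℕ))
    (hone : (i ∈ A ∧ i' ∉ A) ∨ (i' ∈ A ∧ i ∉ A))
    {B : Finset (Fin m)} (hB : B.card = k)
    (hAB : ∀ x, x ∈ B ↔ Equiv.swap i' i x ∈ A) (t : Fin k) :
    B.orderEmbOfFin hB t = Equiv.swap i' i (A.orderEmbOfFin hA t) := by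
  have key : (fun t => Equiv.swap i' i (A.orderEmbOfFin hA t)) = ⇑(B.orderEmbOfFin hB) := by
    refine Finset.orderEmbOfFin_unique hB (fun x => ?_) ?_
    · rw [hAB, Equiv.swap_apply_self]
      exact A.orderEmbOfFin_mem hA x
    · intro a b hab
      have hab' : A.orderEmbOfFin hA a < A.orderEmbOfFin hA b :=
        (A.orderEmbOfFin hA).strictMono hab
      show Equiv.swap i' i (A.orderEmbOfFin hA a) < Equiv.swap i' i (A.orderEmbOfFin hA b)
      set u := A.orderEmbOfFin hA a with hu
      set v := A.orderEmbOfFin hA b with hv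
      have hu' : u ∈ A := A.orderEmbOfFin_mem hA a
      have hv' : v ∈ A := A.orderEmbOfFin_mem hA b
      clear_value u v
      rcases hone with ⟨hiA, hi'A⟩ | ⟨hi'A, hiA⟩
      · -- i ∈ A, i' ∉ A : u ≠ i', v ≠ i'
        have hu1 : u ≠ i' := fun h => hi'A (h ▸ hu')
        have hv1 : v ≠ i' := fun h => hi'A (h ▸ hv')
        by_cases hui : u = i
        · subst hui
          rw [Equiv.swap_apply_right]
          have hvi : v ≠ u := (ne_of_gt hab')
          rw [Equiv.swap_apply_of_ne_of_ne hv1 hvi]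
          rw [Fin.lt_def] at hab' ⊢; omega
        · rw [Equiv.swap_apply_of_ne_of_ne hu1 hui]
          by_cases hvi : v = i
          · subst hvi
            rw [Equiv.swap_apply_right]
            rw [Fin.lt_def] at hab' ⊢
            have : (u : ℕ) ≠ (i' : ℕ) := fun h => hu1 (Fin.ext h)
            omega
          · rw [Equiv.swap_apply_of_ne_of_ne hv1 hvi]
            exact hab'
      · -- i' ∈ A, i ∉ A : u ≠ i, v ≠ i
        have hu1 : u ≠ i := fun h => hiA (h ▸ hu')
        have hv1 : v ≠ i := fun h => hiA (h ▸ hv')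
        by_cases hui : u = i'
        · subst hui
          rw [Equiv.swap_apply_left]
          have hvu : v ≠ u := (ne_of_gt hab')
          rw [Equiv.swap_apply_of_ne_of_ne hvu hv1]
          rw [Fin.lt_def] at hab' ⊢
          have : (v : ℕ) ≠ (i : ℕ) := fun h => hv1 (Fin.ext h)
          omega
        · rw [Equiv.swap_apply_of_ne_of_ne hui hu1]
          by_cases hvi : v = i'
          · subst hvi
            rw [Equiv.swap_apply_left]
            rw [Fin.lt_def] at hab' ⊢; omega
          · rw [Equiv.swap_apply_of_ne_of_ne hvi hv1]
            exact hab'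
  exact (congrFun key t).symm

lemma compl_image_perm (σ : Equiv.Perm (Fin m)) (I : Finset (Fin m)) :
    (I.image ⇑σ)ᶜ = Iᶜ.image ⇑σ := by
  ext x
  simp only [Finset.mem_compl, Finset.mem_image, not_exists, not_and]
  constructor
  · intro h
    exact ⟨σ.symm x, fun hx => h _ hx (σ.apply_symm_apply x), σ.apply_symm_apply x⟩
  · rintro ⟨a, ha, rfl⟩ b hb hba
    exact ha (by rwa [← σ.injective hba])

lemma mem_image_swap (i' i : Fin m) (A : Finset (Fin m)) (x : Fin m) :
    x ∈ A.image ⇑(Equiv.swap i' i) ↔ Equiv.swap i' i x ∈ A := by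
  simp only [Finset.mem_image]
  constructor
  · rintro ⟨a, ha, rfl⟩; rwa [Equiv.swap_apply_self]
  · intro h; exact ⟨_, h, Equiv.swap_apply_self _ _ _⟩

lemma sum_image_swap {i' i : Fin m} (hadj : (i' : ℕ) + 1 = (i : ℕ)) {I : Finset (Fin m)}
    (hmem : i ∈ I) (hnot : i' ∉ I) :
    (∑ x ∈ I.image ⇑(Equiv.swap i' i), (x : ℕ)) + 1 = ∑ x ∈ I, (x : ℕ) := by
  rw [Finset.sum_image (fun a _ b _ h => (Equiv.swap i' i).injective h)]
  rw [← Finset.sum_erase_add _ _ hmem, ← Finset.sum_erase_add I (fun x => (x : ℕ)) hmem,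
    Equiv.swap_apply_right]
  have hcongr : ∑ x ∈ I.erase i, ((Equiv.swap i' i x : Fin m) : ℕ) = ∑ x ∈ I.erase i, (x : ℕ) := by
    refine Finset.sum_congr rfl (fun x hx => ?_)
    have hx1 : x ≠ i := Finset.ne_of_mem_erase hx
    have hx2 : x ≠ i' := fun h => hnot (h ▸ Finset.mem_of_mem_erase hx)
    rw [Equiv.swap_apply_of_ne_of_ne hx2 hx1]
  omega

lemma embEquiv_swap (I : Finset (Fin m)) (hI : I.card = k) (hIc : Iᶜ.card = r)
    {i' i : Fin m} (hadj : (i' : ℕ) + 1 = (i : ℕ)) (hmem : i ∈ I) (hnot : i' ∉ I)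
    (hI' : (I.image ⇑(Equiv.swap i' i)).card = k)
    (hI'c : (I.image ⇑(Equiv.swap i' i))ᶜ.card = r) :
    embEquiv (I.image ⇑(Equiv.swap i' i)) hI' hI'c
      = (embEquiv I hI hIc).trans (Equiv.swap i' i) := by
  apply Equiv.ext
  rintro (t | t)
  · show (I.image ⇑(Equiv.swap i' i)).orderEmbOfFin hI' t
      = Equiv.swap i' i (I.orderEmbOfFin hI t)
    exact swap_orderEmbOfFin hI hadj (Or.inl ⟨hmem, hnot⟩) hI'
      (fun x => mem_image_swap i' i I x) t
  · show (I.image ⇑(Equiv.swap i' i))ᶜ.orderEmbOfFin hI'c t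
      = Equiv.swap i' i (Iᶜ.orderEmbOfFin hIc t)
    refine swap_orderEmbOfFin hIc hadj
      (Or.inr ⟨Finset.mem_compl.2 hnot, fun hc => (Finset.mem_compl.1 hc) hmem⟩) hI'c
      (fun x => ?_) t
    rw [compl_image_perm]
    exact mem_image_swap i' i Iᶜ x


/-- A predecessor-closed subset of `Fin m` of cardinality `k` is `{0, ..., k-1}`. -/
lemma dc_char {I : Finset (Fin m)} (hI : I.card = k)
    (hdc : ∀ x ∈ I, ∀ y : Fin m, (y : ℕ) + 1 = (x : ℕ) → y ∈ I) (x : Fin m) :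
    x ∈ I ↔ (x : ℕ) < k := by
  have hfull : ∀ d : ℕ, ∀ x ∈ I, ∀ y : Fin m, (y : ℕ) + d = (x : ℕ) → y ∈ I := by
    intro d
    induction d with
    | zero => intro x hx y hy; rwa [show y = x from Fin.ext (by omega)]
    | succ d ih =>
      intro x hx y hy
      have hy1 : (y : ℕ) + 1 < m := by have := x.isLt; omega
      have h1 : (⟨(y : ℕ) + 1, hy1⟩ : Fin m) ∈ I := ih x hx _ (by simp; omega)
      exact hdc _ h1 y (by simp)
  constructor
  · intro hx
    have hsub : Finset.Iic x ⊆ I := by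
      intro y hy
      rw [Finset.mem_Iic] at hy
      exact hfull ((x : ℕ) - (y : ℕ)) x hx y (by have := Fin.le_def.1 hy; omega)
    have := Finset.card_le_card hsub
    rw [Fin.card_Iic, hI] at this
    omega
  · intro hx
    by_contra hxI
    have hsub : I ⊆ Finset.Iio x := by
      intro y hy
      rw [Finset.mem_Iio]
      rcases lt_or_ge y x with h | h
      · exact h
      · exact absurd (hfull ((y : ℕ) - (x : ℕ)) y hy x (by have := Fin.le_def.1 h; omega)) hxI
    have := Finset.card_le_card hsub
    rw [Fin.card_Iio, hI] at this
    omega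

/-- If `I` is not predecessor-closed, we can move one element down by one, changing the sign. -/
lemma sign_move (I : Finset (Fin m)) (hI : I.card = k) (hIc : Iᶜ.card = r)
    (hd : ¬ ∀ x ∈ I, ∀ y : Fin m, (y : ℕ) + 1 = (x : ℕ) → y ∈ I) :
    ∃ (I' : Finset (Fin m)) (hI' : I'.card = k) (hI'c : I'ᶜ.card = r),
      ((∑ i ∈ I', (i : ℕ)) + 1 = ∑ i ∈ I, (i : ℕ)) ∧
      ∀ (J : Finset (Fin m)) (hJ : J.card = k) (hJc : Jᶜ.card = r),
        Equiv.Perm.sign ((embEquiv I hI hIc).trans (embEquiv J hJ hJc).symm)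
          = - Equiv.Perm.sign ((embEquiv I' hI' hI'c).trans (embEquiv J hJ hJc).symm) := by
  push_neg at hd
  obtain ⟨i, hi, i', hadj, hnot⟩ := hd
  set s : Equiv.Perm (Fin m) := Equiv.swap i' i with hs
  refine ⟨I.image ⇑s, by rw [Finset.card_image_of_injective _ s.injective, hI],
    by rw [compl_image_perm, Finset.card_image_of_injective _ s.injective, hIc],
    sum_image_swap hadj hi hnot, fun J hJ hJc => ?_⟩
  rw [embEquiv_swap I hI hIc hadj hi hnot]
  have hππ : ((embEquiv I hI hIc).trans s).trans (embEquiv J hJ hJc).symm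
      = ((embEquiv I hI hIc).trans (embEquiv J hJ hJc).symm).trans
        ((embEquiv J hJ hJc).symm.permCongr s) := by
    ext x
    simp [Equiv.permCongr_apply]
  rw [hππ]
  have : ∀ (a b : Equiv.Perm (Fin k ⊕ Fin r)), a.trans b = b * a := fun _ _ => rfl
  rw [this, _root_.map_mul, Equiv.Perm.sign_permCongr, Equiv.Perm.sign_swap
    (fun h => by rw [h] at hadj; omega)]
  simp

lemma sign_embEquiv (I J : Finset (Fin m)) (hI : I.card = k) (hJ : J.card = k)
    (hIc : Iᶜ.card = r) (hJc : Jᶜ.card = r) :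
    Equiv.Perm.sign ((embEquiv I hI hIc).trans (embEquiv J hJ hJc).symm)
      = (-1 : ℤˣ) ^ ((∑ i ∈ I, (i : ℕ)) + ∑ j ∈ J, (j : ℕ)) := by
  set n := (∑ i ∈ I, (i : ℕ)) + ∑ j ∈ J, (j : ℕ) with hn
  clear_value n
  induction n using Nat.strong_induction_on generalizing I J with
  | _ n ih =>
  by_cases hd : ¬ ∀ x ∈ I, ∀ y : Fin m, (y : ℕ) + 1 = (x : ℕ) → y ∈ I
  · obtain ⟨I', hI', hI'c, hsum, hsign⟩ := sign_move I hI hIc hd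
    rw [hsign J hJ hJc, ih (n - 1) (by omega) I' J hI' hJ hI'c hJc (by omega)]
    have hn1 : n = (n - 1) + 1 := by omega
    conv_rhs => rw [hn1, pow_succ]
    rw [mul_neg_one]
  · by_cases hd2 : ¬ ∀ x ∈ J, ∀ y : Fin m, (y : ℕ) + 1 = (x : ℕ) → y ∈ J
    · obtain ⟨J', hJ', hJ'c, hsum, hsign⟩ := sign_move J hJ hJc hd2
      have hsymm : (embEquiv I hI hIc).trans (embEquiv J hJ hJc).symm
          = ((embEquiv J hJ hJc).trans (embEquiv I hI hIc).symm).symm := by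
        ext x; simp
      rw [hsymm, Equiv.Perm.sign_symm, hsign I hI hIc,
        ih (n - 1) (by omega) J' I hJ' hI hJ'c hIc (by omega)]
      have hn1 : n = (n - 1) + 1 := by omega
      conv_rhs => rw [hn1, pow_succ]
      rw [mul_neg_one]
    · push_neg at hd hd2
      have hIJ : I = J := by
        ext x
        rw [dc_char hI hd, dc_char hJ hd2]
      subst hIJ
      have h2 : (embEquiv I hI hIc).trans (embEquiv I hJ hJc).symm = Equiv.refl _ := by
        ext x; simp [embEquiv]
      rw [h2]
      have he : Even n := ⟨∑ i ∈ I, (i : ℕ), by omega⟩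
      rw [he.neg_one_pow]
      simp

lemma det_aux {R : Type*} [CommRing R] (X : Matrix (Fin m) (Fin m) R)
    (hreg : IsLeftRegular X.det) (hk : 1 ≤ k)
    (I J : Finset (Fin m)) (hI : I.card = k) (hJ : J.card = k)
    (hIc : Iᶜ.card = r) (hJc : Jᶜ.card = r) :
    det ((adjugate X).submatrix ⇑(J.orderEmbOfFin hJ) ⇑(I.orderEmbOfFin hI))
      = (-1 : R) ^ ((∑ i ∈ I, (i : ℕ)) + ∑ j ∈ J, (j : ℕ)) * X.det ^ (k - 1)
        * det (X.submatrix ⇑(Iᶜ.orderEmbOfFin hIc) ⇑(Jᶜ.orderEmbOfFin hJc)) := by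
  set n := (∑ i ∈ I, (i : ℕ)) + ∑ j ∈ J, (j : ℕ) with hn
  set eI := embEquiv I hI hIc with heI
  set eJ := embEquiv J hJ hJc with heJ
  set M : Matrix (Fin k ⊕ Fin r) (Fin k ⊕ Fin r) R := X.submatrix ⇑eI ⇑eJ with hM
  set N : Matrix (Fin k ⊕ Fin r) (Fin k ⊕ Fin r) R := (adjugate X).submatrix ⇑eJ ⇑eI with hN
  have hMN : M * N = X.det • 1 := by
    rw [hM, hN, Matrix.submatrix_mul_equiv, mul_adjugate]
    ext a b
    simp [Matrix.submatrix_apply, Matrix.smul_apply, Matrix.one_apply,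
      EmbeddingLike.apply_eq_iff_eq]
  -- blocks
  set A := M.toBlocks₁₁ with hA
  set B := M.toBlocks₁₂ with hB
  set C := M.toBlocks₂₁ with hC
  set D := M.toBlocks₂₂ with hD
  set P := N.toBlocks₁₁ with hP
  set Q := N.toBlocks₁₂ with hQ
  set Rb := N.toBlocks₂₁ with hRb
  set S := N.toBlocks₂₂ with hS
  have hMb : M = fromBlocks A B C D := (fromBlocks_toBlocks M).symm
  have hNb : N = fromBlocks P Q Rb S := (fromBlocks_toBlocks N).symm
  have hsmul : (X.det • (1 : Matrix (Fin k ⊕ Fin r) (Fin k ⊕ Fin r) R))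
      = fromBlocks (X.det • 1) 0 0 (X.det • 1) := by
    rw [← fromBlocks_one, fromBlocks_smul]
    simp
  rw [hMb, hNb, fromBlocks_multiply, hsmul] at hMN
  have h11 : A * P + B * Rb = X.det • 1 := by
    have := congrArg Matrix.toBlocks₁₁ hMN
    simpa [Matrix.toBlocks_fromBlocks₁₁] using this
  have h21 : C * P + D * Rb = 0 := by
    have := congrArg Matrix.toBlocks₂₁ hMN
    simpa [Matrix.toBlocks_fromBlocks₂₁] using this
  -- key determinant identity
  have hkey : det M * det P = X.det ^ k * det D := by
    have hprod : M * fromBlocks P 0 Rb 1 = fromBlocks (X.det • 1) B 0 D := by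
      rw [hMb, fromBlocks_multiply, h11, h21]
      congr 1 <;> simp
    have h1 := congrArg det hprod
    rw [det_mul, det_fromBlocks_zero₁₂, det_fromBlocks_zero₂₁, det_one, mul_one,
      det_smul, det_one, mul_one, Fintype.card_fin] at h1
    exact h1
  -- det M via the sign
  have hMperm : M = (X.submatrix ⇑eJ ⇑eJ).submatrix ⇑(eI.trans eJ.symm) id := by
    ext a b
    simp [hM, Matrix.submatrix_apply, Equiv.apply_symm_apply]
  have hdetM : det M = (-1 : R) ^ n * X.det := by
    rw [hMperm, det_permute, det_submatrix_equiv_self, sign_embEquiv I J hI hJ hIc hJc, ← hn]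
    norm_cast
  -- assemble
  have hsq : ((-1 : R) ^ n) * ((-1 : R) ^ n) = 1 := by
    rw [← pow_add]
    exact Even.neg_one_pow ⟨n, rfl⟩
  have heq' : (-1 : R) ^ n * X.det * det P = X.det ^ k * det D := by
    rw [← hdetM]; exact hkey
  have hkk : X.det ^ k = X.det ^ (k - 1) * X.det := by
    conv_lhs => rw [show k = (k - 1) + 1 by omega, pow_succ]
  have key2 : X.det * det P = X.det * ((-1 : R) ^ n * X.det ^ (k - 1) * det D) := by
    calc X.det * det P = ((-1 : R) ^ n * (-1 : R) ^ n) * (X.det * det P) := by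
          rw [hsq, one_mul]
      _ = (-1 : R) ^ n * ((-1 : R) ^ n * X.det * det P) := by ring
      _ = (-1 : R) ^ n * (X.det ^ k * det D) := by rw [heq']
      _ = X.det * ((-1 : R) ^ n * X.det ^ (k - 1) * det D) := by rw [hkk]; ring
  have hPdet := hreg key2
  have hPeq : det ((adjugate X).submatrix ⇑(J.orderEmbOfFin hJ) ⇑(I.orderEmbOfFin hI)) = det P := by
    congr 1
  have hDeq : det (X.submatrix ⇑(Iᶜ.orderEmbOfFin hIc) ⇑(Jᶜ.orderEmbOfFin hJc)) = det D := by
    congr 1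
  rw [hPeq, hDeq, hPdet]
lemma det_aux' {R : Type*} [CommRing R] (X : Matrix (Fin m) (Fin m) R) (hk : 1 ≤ k)
    (I J : Finset (Fin m)) (hI : I.card = k) (hJ : J.card = k)
    (hIc : Iᶜ.card = r) (hJc : Jᶜ.card = r) :
    det ((adjugate X).submatrix ⇑(J.orderEmbOfFin hJ) ⇑(I.orderEmbOfFin hI))
      = (-1 : R) ^ ((∑ i ∈ I, (i : ℕ)) + ∑ j ∈ J, (j : ℕ)) * X.det ^ (k - 1)
        * det (X.submatrix ⇑(Iᶜ.orderEmbOfFin hIc) ⇑(Jᶜ.orderEmbOfFin hJc)) := by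
  set A' := mvPolynomialX (Fin m) (Fin m) ℤ with hA'
  have hreg : IsLeftRegular A'.det := fun x y hxy =>
    mul_left_cancel₀ (det_mvPolynomialX_ne_zero (Fin m) ℤ) hxy
  have H := det_aux A' hreg hk I J hI hJ hIc hJc
  set φ : MvPolynomial (Fin m × Fin m) ℤ →+* R :=
    (MvPolynomial.aeval (fun p : Fin m × Fin m => X p.1 p.2)).toRingHom with hφ
  have hmap : A'.map ⇑φ = X := by
    ext i j
    simp [hφ, hA', Matrix.map_apply, mvPolynomialX_apply]
  have := congrArg φ H
  rw [RingHom.map_det, RingHom.mapMatrix_apply, ← Matrix.submatrix_map,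
    ← RingHom.mapMatrix_apply, RingHom.map_adjugate, RingHom.mapMatrix_apply, hmap] at this
  rw [_root_.map_mul, _root_.map_mul, map_pow, map_pow, map_neg, _root_.map_one,
    RingHom.map_det, RingHom.mapMatrix_apply, hmap,
    RingHom.map_det, RingHom.mapMatrix_apply, ← Matrix.submatrix_map, hmap] at this
  exact this

end JacobiAux

/-- Jacobi complementary minor theorem: for `|I| = |J| ≥ 1`, the minor of the cofactor matrix
`C(X) = (adjugate X)ᵀ` satisfies
`M_{I,J}(C(X)) = (−1)^{Σ_{i∈I} i + Σ_{j∈J} j} det(X)^{|I|−1} M_{Iᶜ,Jᶜ}(X)`. -/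
theorem stmt_4 {m : ℕ} {K : Type*} [Field K] (X : Matrix (Fin m) (Fin m) K)
    (I J : Finset (Fin m)) (h : I.card = J.card) (h1 : 1 ≤ I.card) :
    minorOf ((X.adjugate)ᵀ) I J =
      (-1 : K) ^ (∑ i ∈ I, (i : ℕ) + ∑ j ∈ J, (j : ℕ)) * X.det ^ (I.card - 1) *
        minorOf X Iᶜ Jᶜ := by
  have hc : Iᶜ.card = Jᶜ.card := by
    simp [Finset.card_compl, h]
  rw [minorOf, dif_pos h, minorOf, dif_pos hc]
  rw [← Matrix.transpose_submatrix, Matrix.det_transpose]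
  exact JacobiAux.det_aux' X h1 I J rfl h.symm rfl hc.symm
end
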